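/- Decoupling lemma for MDP perturbations: let φ be an ergodic finite MDP and let U₁, U₂ be disjoint sets of state-action pairs (x,a) with a suboptimal in state x under φ. For a fixed kernel pair (p,q), define MDPs ψ_j (j = 0,1,2) that equal (p,q) on U_j (with U₀ = U₁ ∪ U₂) and equal φ elsewhere. If Π*(φ) ∩ Π*(ψ₀) = ∅, then Π*(φ) ∩ Π*(ψ₁) = ∅ or Π*(φ) ∩ Π*(ψ₂) = ∅. -/

import Mathlib

open Classical

section MDP

variable {S A : Type*}

/-- Finite-horizon value iterates of a stationary deterministic policy `f` in the MDP
with transition kernel `p` and mean reward `r`. -/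
noncomputable def valueIter [Fintype S] (p : S → A → S → ℝ) (r : S → A → ℝ)
    (f : S → A) : ℕ → S → ℝ
  | 0 => fun _ => 0
  | n + 1 => fun x => r x (f x) + ∑ y, p x (f x) y * valueIter p r f n y

/-- Gain (long-term average reward) of policy `f` started from `x`. -/
noncomputable def gain [Fintype S] (p : S → A → S → ℝ) (r : S → A → ℝ)
    (f : S → A) (x : S) : ℝ :=
  Filter.atTop.limsup (fun n : ℕ => valueIter p r f n x / n)

/-- The set `Π*` of stationary deterministic policies with maximal gain from every state. -/
def OptPolicies [Fintype S] (p : S → A → S → ℝ) (r : S → A → ℝ) : Set (S → A) :=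
  {f | ∀ g : S → A, ∀ x : S, gain p r g x ≤ gain p r f x}

/-- Transition matrix of the Markov chain induced by policy `f`. -/
def transMatrix (p : S → A → S → ℝ) (f : S → A) : Matrix S S ℝ :=
  fun x y => p x (f x) y

/-- Ergodicity: under any stationary policy, the induced Markov chain is irreducible. -/
def IsErgodic [Fintype S] [DecidableEq S] (p : S → A → S → ℝ) : Prop :=
  ∀ f : S → A, ∀ x y : S, ∃ n : ℕ, 0 < n ∧ 0 < ((transMatrix p f) ^ n) x y

/-- Transition kernel equal to `pbar` on `U` and to `p` elsewhere. -/
def perturbP [DecidableEq S] [DecidableEq A] (U : Finset (S × A))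
    (p pbar : S → A → S → ℝ) : S → A → S → ℝ :=
  fun x a y => if (x, a) ∈ U then pbar x a y else p x a y

/-- Reward function equal to `rbar` on `U` and to `r` elsewhere. -/
def perturbR [DecidableEq S] [DecidableEq A] (U : Finset (S × A))
    (r rbar : S → A → ℝ) : S → A → ℝ :=
  fun x a => if (x, a) ∈ U then rbar x a else r x a

namespace Stmt11Aux
open Matrix
set_option linter.unusedSectionVars false

variable [Fintype S] [DecidableEq S]

/-- entrywise nonneg + row sums equal 1 -/
def Stoch (M : Matrix S S ℝ) : Prop := (∀ i j, 0 ≤ M i j) ∧ ∀ i, ∑ j, M i j = 1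

/-- entrywise nonneg + row sums ≤ 1 -/
def SubStoch (M : Matrix S S ℝ) : Prop := (∀ i j, 0 ≤ M i j) ∧ ∀ i, ∑ j, M i j ≤ 1

lemma mul_nonneg_entries {M N : Matrix S S ℝ} (hM : ∀ i j, 0 ≤ M i j)
    (hN : ∀ i j, 0 ≤ N i j) : ∀ i j, 0 ≤ (M * N) i j := by
  intro i j
  rw [Matrix.mul_apply]
  exact Finset.sum_nonneg fun k _ => mul_nonneg (hM i k) (hN k j)

lemma Stoch.mul {M N : Matrix S S ℝ} (hM : Stoch M) (hN : Stoch N) : Stoch (M * N) := by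
  refine ⟨mul_nonneg_entries hM.1 hN.1, fun i => ?_⟩
  simp only [Matrix.mul_apply]
  rw [Finset.sum_comm]
  simp only [← Finset.mul_sum, hN.2]
  simpa using hM.2 i

lemma Stoch.pow {M : Matrix S S ℝ} (hM : Stoch M) (n : ℕ) : Stoch (M ^ n) := by
  induction n with
  | zero =>
    constructor
    · intro i j; rw [pow_zero, Matrix.one_apply]; split <;> norm_num
    · intro i; rw [pow_zero]; simp [Matrix.one_apply]
  | succ n ih => rw [pow_succ]; exact ih.mul hM

lemma SubStoch.mul {M N : Matrix S S ℝ} (hM : SubStoch M) (hN : SubStoch N) :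
    SubStoch (M * N) := by
  refine ⟨mul_nonneg_entries hM.1 hN.1, fun i => ?_⟩
  simp only [Matrix.mul_apply]
  rw [Finset.sum_comm]
  calc ∑ k, ∑ j, M i k * N k j = ∑ k, M i k * ∑ j, N k j := by
        simp [Finset.mul_sum]
    _ ≤ ∑ k, M i k * 1 := by
        refine Finset.sum_le_sum fun k _ => mul_le_mul_of_nonneg_left (hN.2 k) (hM.1 i k)
    _ ≤ 1 := by simpa using hM.2 i

lemma SubStoch.pow {M : Matrix S S ℝ} (hM : SubStoch M) (n : ℕ) : SubStoch (M ^ n) := by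
  induction n with
  | zero =>
    constructor
    · intro i j; rw [pow_zero, Matrix.one_apply]; split <;> norm_num
    · intro i; rw [pow_zero]; simp [Matrix.one_apply]
  | succ n ih => rw [pow_succ]; exact ih.mul hM

lemma mulVec_apply' (M : Matrix S S ℝ) (v : S → ℝ) (x : S) :
    (M *ᵥ v) x = ∑ y, M x y * v y := rfl

lemma mulVec_mono {M : Matrix S S ℝ} (hM : ∀ i j, 0 ≤ M i j) {u v : S → ℝ}
    (h : ∀ x, u x ≤ v x) : ∀ x, (M *ᵥ u) x ≤ (M *ᵥ v) x := by
  intro x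
  simp only [mulVec_apply']
  exact Finset.sum_le_sum fun y _ => mul_le_mul_of_nonneg_left (h y) (hM x y)

lemma Stoch.mulVec_const {M : Matrix S S ℝ} (hM : Stoch M) (c : ℝ) :
    ∀ x, (M *ᵥ (fun _ => c)) x = c := by
  intro x; simp only [mulVec_apply']
  rw [← Finset.sum_mul, hM.2 x, one_mul]

lemma Stoch.mulVec_le {M : Matrix S S ℝ} (hM : Stoch M) {v : S → ℝ} {B : ℝ}
    (h : ∀ x, v x ≤ B) : ∀ x, (M *ᵥ v) x ≤ B := by
  intro x
  calc (M *ᵥ v) x ≤ (M *ᵥ (fun _ => B)) x := mulVec_mono hM.1 h x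
    _ = B := hM.mulVec_const B x

lemma Stoch.le_mulVec {M : Matrix S S ℝ} (hM : Stoch M) {v : S → ℝ} {B : ℝ}
    (h : ∀ x, B ≤ v x) : ∀ x, B ≤ (M *ᵥ v) x := by
  intro x
  calc B = (M *ᵥ (fun _ => B)) x := (hM.mulVec_const B x).symm
    _ ≤ (M *ᵥ v) x := mulVec_mono hM.1 h x

lemma mulVec_nonneg {M : Matrix S S ℝ} (hM : ∀ i j, 0 ≤ M i j) {v : S → ℝ}
    (h : ∀ x, 0 ≤ v x) : ∀ x, 0 ≤ (M *ᵥ v) x := by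
  intro x
  exact Finset.sum_nonneg fun y _ => mul_nonneg (hM x y) (h y)

lemma entry_le_one {M : Matrix S S ℝ} (hM : Stoch M) (i j : S) : M i j ≤ 1 := by
  have := hM.2 i
  calc M i j ≤ ∑ k, M i k := Finset.single_le_sum (fun k _ => hM.1 i k) (Finset.mem_univ j)
    _ = 1 := hM.2 i

variable [Fintype A]

lemma transMatrix_stoch (q : S → A → S → ℝ)
    (hq : ∀ x a, (∀ y, 0 ≤ q x a y) ∧ ∑ y, q x a y = 1) (h : S → A) :
    Stoch (transMatrix q h) :=
  ⟨fun i j => (hq i (h i)).1 j, fun i => (hq i (h i)).2⟩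

lemma valueIter_succ (q : S → A → S → ℝ) (r : S → A → ℝ) (h : S → A) (n : ℕ) (x : S) :
    valueIter q r h (n+1) x = r x (h x) + (transMatrix q h *ᵥ valueIter q r h n) x := rfl

lemma valueIter_nonneg (q : S → A → S → ℝ) (r : S → A → ℝ) (h : S → A)
    (hq : ∀ x a, (∀ y, 0 ≤ q x a y) ∧ ∑ y, q x a y = 1)
    (hr : ∀ x a, 0 ≤ r x a) : ∀ n x, 0 ≤ valueIter q r h n x := by
  intro n
  induction n with
  | zero => intro x; simp [valueIter]
  | succ n ih =>
    intro x
    rw [valueIter_succ]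
    have := mulVec_nonneg (M := transMatrix q h) (fun i j => (hq i (h i)).1 j) ih x
    exact add_nonneg (hr x (h x)) this

lemma valueIter_le_n (q : S → A → S → ℝ) (r : S → A → ℝ) (h : S → A)
    (hq : ∀ x a, (∀ y, 0 ≤ q x a y) ∧ ∑ y, q x a y = 1)
    (hr : ∀ x a, r x a ≤ 1) : ∀ n x, valueIter q r h n x ≤ n := by
  intro n
  induction n with
  | zero => intro x; simp [valueIter]
  | succ n ih =>
    intro x
    rw [valueIter_succ]
    have hst := transMatrix_stoch q hq h
    have := hst.mulVec_le (B := (n : ℝ)) ih x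
    push_cast
    linarith [hr x (h x)]

lemma mulVec_sum_range (M : Matrix S S ℝ) (v : ℕ → S → ℝ) (K : ℕ) :
    M *ᵥ (∑ k ∈ Finset.range K, v k) = ∑ k ∈ Finset.range K, M *ᵥ v k := by
  induction K with
  | zero => simp [Matrix.mulVec_zero]
  | succ K ih => rw [Finset.sum_range_succ, Finset.sum_range_succ, Matrix.mulVec_add, ih]

/-- Fundamental identity: if the one-step rewards satisfy a Bellman-type identity
with gain `g`, relative value `b` and discrepancy `d`, then the value iterates
decompose accordingly. -/
lemma valueIter_eq_of_eval (q : S → A → S → ℝ) (r : S → A → ℝ) (h : S → A)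
    (hq : ∀ x a, (∀ y, 0 ≤ q x a y) ∧ ∑ y, q x a y = 1)
    (g : ℝ) (b d : S → ℝ)
    (hbell : ∀ x, r x (h x) = g + b x - (transMatrix q h *ᵥ b) x + d x) :
    ∀ n, valueIter q r h n = fun x => n * g + b x - ((transMatrix q h ^ n) *ᵥ b) x
      + ∑ k ∈ Finset.range n, ((transMatrix q h ^ k) *ᵥ d) x := by
  set P := transMatrix q h with hP
  have hst : Stoch P := transMatrix_stoch q hq h
  intro n
  induction n with
  | zero =>
    funext x
    simp [valueIter, Matrix.one_mulVec]
  | succ n ih =>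
    funext x
    rw [valueIter_succ, hbell x, ih]
    have hvec : (fun y => (n:ℝ) * g + b y - ((P ^ n) *ᵥ b) y
        + ∑ k ∈ Finset.range n, ((P ^ k) *ᵥ d) y)
        = ((fun _ => (n:ℝ) * g) + b - ((P ^ n) *ᵥ b)
            + ∑ k ∈ Finset.range n, ((P ^ k) *ᵥ d)) := by
      funext y
      simp [Finset.sum_apply]
    rw [hvec, Matrix.mulVec_add, Matrix.mulVec_sub, Matrix.mulVec_add, mulVec_sum_range,
      Matrix.mulVec_mulVec]
    have h1 : (P *ᵥ fun _ => (n:ℝ) * g) = fun _ => (n:ℝ) * g := funext (hst.mulVec_const _)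
    rw [h1]
    have h2 : ∀ k, P *ᵥ ((P ^ k) *ᵥ d) = (P ^ (k+1)) *ᵥ d := by
      intro k; rw [Matrix.mulVec_mulVec, ← pow_succ']
    simp only [Pi.add_apply, Pi.sub_apply, Finset.sum_apply]
    rw [Finset.sum_congr rfl (fun k _ => congrFun (h2 k) x)]
    have h3 : ∑ k ∈ Finset.range (n+1), ((P ^ k) *ᵥ d) x
        = d x + ∑ k ∈ Finset.range n, ((P ^ (k+1)) *ᵥ d) x := by
      rw [Finset.sum_range_succ']
      simp [Matrix.one_mulVec, add_comm]
    rw [← pow_succ']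
    push_cast
    rw [h3]
    ring

/-- Superharmonic upper bound on value iterates. -/
lemma valueIter_le_of_superharmonic (q : S → A → S → ℝ) (r : S → A → ℝ) (h : S → A)
    (hq : ∀ x a, (∀ y, 0 ≤ q x a y) ∧ ∑ y, q x a y = 1)
    (g : ℝ) (b : S → ℝ) (B : ℝ) (hb : ∀ x, |b x| ≤ B)
    (hineq : ∀ x, r x (h x) + (transMatrix q h *ᵥ b) x ≤ g + b x) :
    ∀ n x, valueIter q r h n x ≤ n * g + 2 * B := by
  set P := transMatrix q h with hP
  have hst : Stoch P := transMatrix_stoch q hq h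
  have key : ∀ n x, valueIter q r h n x ≤ n * g + b x + B := by
    intro n
    induction n with
    | zero => intro x; have := hb x; simp [valueIter]; cases abs_le.1 this; linarith
    | succ n ih =>
      intro x
      rw [valueIter_succ]
      have h1 : (P *ᵥ valueIter q r h n) x ≤ (P *ᵥ (fun y => n * g + b y + B)) x :=
        mulVec_mono hst.1 ih x
      have h2 : (P *ᵥ (fun y => n * g + b y + B)) = (fun _ => (n:ℝ)*g + B) + (P *ᵥ b) := by
        have : (fun y => (n:ℝ) * g + b y + B) = (fun _ => (n:ℝ)*g + B) + b := by
          funext y; simp; ring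
        rw [this, Matrix.mulVec_add]
        congr 1
        exact funext (hst.mulVec_const _)
      rw [h2] at h1
      simp only [Pi.add_apply] at h1
      have := hineq x
      push_cast
      linarith
  intro n x
  have := key n x
  have := hb x
  cases abs_le.1 (hb x)
  linarith

open Filter in
lemma gain_eq_of_bound (q : S → A → S → ℝ) (r : S → A → ℝ) (h : S → A) (x : S)
    (g C : ℝ) (hC : ∀ n : ℕ, |valueIter q r h n x - n * g| ≤ C) :
    gain q r h x = g := by
  have htend : Tendsto (fun n : ℕ => valueIter q r h n x / n) atTop (nhds g) := by
    rw [tendsto_iff_dist_tendsto_zero]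
    apply squeeze_zero' (g := fun n : ℕ => C / n)
    · exact Filter.Eventually.of_forall fun n => dist_nonneg
    · filter_upwards [eventually_ge_atTop 1] with n hn
      have hn' : (0:ℝ) < n := by exact_mod_cast hn
      rw [Real.dist_eq]
      have heq : valueIter q r h n x / n - g = (valueIter q r h n x - n * g) / n := by
        field_simp
      rw [heq, abs_div, abs_of_pos hn']
      exact div_le_div_of_nonneg_right (hC n) hn'.le
    · exact tendsto_const_div_atTop_nhds_zero_nat C
  exact htend.limsup_eq

open Filter in
lemma gain_le_of_bound (q : S → A → S → ℝ) (r : S → A → ℝ) (h : S → A) (x : S)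
    (g C : ℝ) (hpos : ∀ n : ℕ, 0 ≤ valueIter q r h n x)
    (hub : ∀ n : ℕ, valueIter q r h n x ≤ n * g + C) :
    gain q r h x ≤ g := by
  set u : ℕ → ℝ := fun n => valueIter q r h n x / n with hu
  set w : ℕ → ℝ := fun n => g + C / n with hw
  have hwt : Tendsto w atTop (nhds g) := by
    have := (tendsto_const_div_atTop_nhds_zero_nat C).const_add g
    simpa [hw] using this
  have hle : ∀ᶠ n in atTop, u n ≤ w n := by
    filter_upwards [eventually_ge_atTop 1] with n hn
    have hn' : (0:ℝ) < n := by exact_mod_cast hn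
    have := hub n
    rw [hu, hw]
    rw [div_le_iff₀ hn']
    calc valueIter q r h n x ≤ n * g + C := hub n
      _ = (g + C / n) * n := by field_simp
  have hcb : IsCoboundedUnder (· ≤ ·) atTop u := by
    apply IsBoundedUnder.isCoboundedUnder_le (α := ℝ)
    refine ⟨0, ?_⟩
    rw [eventually_map]
    exact Eventually.of_forall fun n => div_nonneg (hpos n) (Nat.cast_nonneg n)
  have hbd : IsBoundedUnder (· ≤ ·) atTop w := hwt.isBoundedUnder_le
  calc gain q r h x = limsup u atTop := rfl
    _ ≤ limsup w atTop := limsup_le_limsup hle hcb hbd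
    _ = g := hwt.limsup_eq

open Filter in
lemma le_gain_of_bound (q : S → A → S → ℝ) (r : S → A → ℝ) (h : S → A) (x : S)
    (g C : ℝ) (hub : ∀ n : ℕ, valueIter q r h n x ≤ n)
    (hlb : ∀ n : ℕ, n * g - C ≤ valueIter q r h n x) :
    g ≤ gain q r h x := by
  set u : ℕ → ℝ := fun n => valueIter q r h n x / n with hu
  set w : ℕ → ℝ := fun n => g - C / n with hw
  have hwt : Tendsto w atTop (nhds g) := by
    have := (tendsto_const_div_atTop_nhds_zero_nat C).const_sub g
    simpa [hw] using this
  have hle : ∀ᶠ n in atTop, w n ≤ u n := by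
    filter_upwards [eventually_ge_atTop 1] with n hn
    have hn' : (0:ℝ) < n := by exact_mod_cast hn
    rw [hu, hw, le_div_iff₀ hn']
    calc (g - C / n) * n = n * g - C := by field_simp
      _ ≤ valueIter q r h n x := hlb n
  have hcb : IsCoboundedUnder (· ≤ ·) atTop w :=
    hwt.isBoundedUnder_ge.isCoboundedUnder_le
  have hbd : IsBoundedUnder (· ≤ ·) atTop u := by
    refine ⟨1, ?_⟩
    rw [eventually_map]
    refine Eventually.of_forall fun n => ?_
    rcases Nat.eq_zero_or_pos n with h0 | h1
    · simp [hu, h0]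
    · have hn' : (0:ℝ) < n := by exact_mod_cast h1
      rw [hu, div_le_iff₀ hn', one_mul]
      exact hub n
  calc g = limsup w atTop := hwt.limsup_eq.symm
    _ ≤ limsup u atTop := limsup_le_limsup hle hcb hbd
    _ = gain q r h x := rfl

section Perturb
variable [DecidableEq A]

lemma valueIter_perturb_eq (U : Finset (S × A)) (p pbar : S → A → S → ℝ)
    (r rbar : S → A → ℝ) (h : S → A) (havoid : ∀ x, (x, h x) ∉ U) :
    ∀ n, valueIter (perturbP U p pbar) (perturbR U r rbar) h n = valueIter p r h n := by
  intro n
  induction n with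
  | zero => rfl
  | succ n ih =>
    funext x
    show perturbR U r rbar x (h x) + _ = r x (h x) + _
    rw [ih]
    congr 1
    · unfold perturbR; rw [if_neg (havoid x)]
    · apply Finset.sum_congr rfl
      intro y _
      unfold perturbP; rw [if_neg (havoid x)]

lemma gain_perturb_eq (U : Finset (S × A)) (p pbar : S → A → S → ℝ)
    (r rbar : S → A → ℝ) (h : S → A) (havoid : ∀ x, (x, h x) ∉ U) (x : S) :
    gain (perturbP U p pbar) (perturbR U r rbar) h x = gain p r h x := by
  unfold gain
  congr 1
  funext n
  rw [valueIter_perturb_eq U p pbar r rbar h havoid n]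

lemma perturb_stoch (U : Finset (S × A)) (p pbar : S → A → S → ℝ)
    (hp : ∀ x a, (∀ y, 0 ≤ p x a y) ∧ ∑ y, p x a y = 1)
    (hpbar : ∀ x a, (∀ y, 0 ≤ pbar x a y) ∧ ∑ y, pbar x a y = 1) :
    ∀ x a, (∀ y, 0 ≤ perturbP U p pbar x a y) ∧ ∑ y, perturbP U p pbar x a y = 1 := by
  intro x a
  unfold perturbP
  by_cases hmem : (x, a) ∈ U <;> simp [hmem, hp x a, hpbar x a, (hp x a).1, (hpbar x a).1]

lemma perturb_rew (U : Finset (S × A)) (r rbar : S → A → ℝ)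
    (hr : ∀ x a, r x a ∈ Set.Icc (0:ℝ) 1) (hrbar : ∀ x a, rbar x a ∈ Set.Icc (0:ℝ) 1) :
    ∀ x a, perturbR U r rbar x a ∈ Set.Icc (0:ℝ) 1 := by
  intro x a
  unfold perturbR
  by_cases hmem : (x, a) ∈ U <;> simp [hmem, hr x a, hrbar x a]

end Perturb

lemma exists_pos_term {f : S → ℝ} (hnn : ∀ v, 0 ≤ f v) (hpos : 0 < ∑ v, f v) :
    ∃ v, 0 < f v := by
  by_contra hcon
  push_neg at hcon
  have : ∑ v, f v ≤ 0 := Finset.sum_nonpos (fun v _ => hcon v)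
  linarith

variable [Nonempty S]

/-- Maximum principle: a harmonic function of an irreducible stochastic matrix
is constant. -/
lemma harmonic_const {P : Matrix S S ℝ} (hst : Stoch P)
    (hirr : ∀ z y : S, ∃ m : ℕ, 0 < m ∧ 0 < (P ^ m) z y)
    {b : S → ℝ} (hb : P *ᵥ b = b) (z y : S) : b z = b y := by
  obtain ⟨xm, _, hmax⟩ := Finset.exists_max_image Finset.univ b Finset.univ_nonempty
  have step : ∀ w z', b w = b xm → 0 < P w z' → b z' = b xm := by
    intro w z' hw hpos
    have h1 : ∑ v, P w v * b v = b w := congrFun hb w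
    have h2 : ∑ v, P w v * b xm = b xm := by
      rw [← Finset.sum_mul, hst.2 w, one_mul]
    have hsum : ∑ v, P w v * (b xm - b v) = 0 := by
      calc ∑ v, P w v * (b xm - b v) = ∑ v, (P w v * b xm - P w v * b v) := by
            apply Finset.sum_congr rfl; intro v _; ring
        _ = b xm - b w := by rw [Finset.sum_sub_distrib, h1, h2]
        _ = 0 := by rw [hw]; ring
    have hterm : ∀ v ∈ Finset.univ, 0 ≤ P w v * (b xm - b v) := fun v _ =>
      mul_nonneg (hst.1 w v) (by linarith [hmax v (Finset.mem_univ v)])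
    have hz := (Finset.sum_eq_zero_iff_of_nonneg hterm).1 hsum z' (Finset.mem_univ z')
    rcases mul_eq_zero.1 hz with hc | hc
    · exact absurd hc (ne_of_gt hpos)
    · linarith
  have reach : ∀ m : ℕ, ∀ z', 0 < (P ^ m) xm z' → b z' = b xm := by
    intro m
    induction m with
    | zero =>
      intro z' hz'
      rw [pow_zero, Matrix.one_apply] at hz'
      split at hz'
      · rename_i heq; rw [← heq]
      · norm_num at hz'
    | succ m ih =>
      intro z' hz'
      rw [pow_succ, Matrix.mul_apply] at hz'
      obtain ⟨w, hw⟩ := exists_pos_term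
        (fun w => mul_nonneg ((hst.pow m).1 xm w) (hst.1 w z')) hz'
      have hw1 : 0 < (P ^ m) xm w := by
        rcases lt_or_eq_of_le ((hst.pow m).1 xm w) with hlt | heq
        · exact hlt
        · rw [← heq] at hw; simp at hw
      have hw2 : 0 < P w z' := by
        rcases lt_or_eq_of_le (hst.1 w z') with hlt | heq
        · exact hlt
        · rw [← heq] at hw; simp at hw
      exact step w z' (ih w hw1) hw2
  obtain ⟨mz, _, hmz⟩ := hirr xm z
  obtain ⟨my, _, hmy⟩ := hirr xm y
  rw [reach mz z hmz, reach my y hmy]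

/-- Existence of a solution to the policy-evaluation equation, by linear algebra. -/
lemma exists_eval {P : Matrix S S ℝ} (hst : Stoch P)
    (hirr : ∀ z y : S, ∃ m : ℕ, 0 < m ∧ 0 < (P ^ m) z y) (rv : S → ℝ) :
    ∃ g : ℝ, ∃ b : S → ℝ, ∀ x, rv x + (P *ᵥ b) x = g + b x := by
  classical
  set one : S → ℝ := fun _ => 1 with hone
  have hPone : P *ᵥ one = one := funext (hst.mulVec_const 1)
  set L : (S → ℝ) →ₗ[ℝ] (S → ℝ) := LinearMap.id - P.mulVecLin with hL
  set Φ : ((S → ℝ) × ℝ) →ₗ[ℝ] (S → ℝ) :=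
    L.coprod (LinearMap.toSpanSingleton ℝ (S → ℝ) one) with hPhi
  have hPhiApp : ∀ bg : (S → ℝ) × ℝ, ∀ x,
      Φ bg x = bg.1 x - (P *ᵥ bg.1) x + bg.2 * 1 := by
    intro bg x
    simp [hPhi, hL, LinearMap.coprod_apply, LinearMap.toSpanSingleton_apply,
      Matrix.mulVecLin, hone, smul_eq_mul]
  have hker : LinearMap.ker Φ = Submodule.span ℝ {((one, 0) : (S → ℝ) × ℝ)} := by
    apply le_antisymm
    · intro bg hbg
      obtain ⟨b, g⟩ := bg
      rw [LinearMap.mem_ker] at hbg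
      have heq : ∀ x, b x - (P *ᵥ b) x + g = 0 := by
        intro x
        have := congrFun hbg x
        simpa using (hPhiApp (b, g) x).symm.trans this
      obtain ⟨xM, _, hmax⟩ := Finset.exists_max_image Finset.univ b Finset.univ_nonempty
      obtain ⟨xm, _, hmin⟩ := Finset.exists_min_image Finset.univ b Finset.univ_nonempty
      have hgle : g ≤ 0 := by
        have h1 : (P *ᵥ b) xM ≤ b xM := hst.mulVec_le (fun v => hmax v (Finset.mem_univ v)) xM
        have := heq xM; linarith
      have hgge : 0 ≤ g := by
        have h1 : b xm ≤ (P *ᵥ b) xm := hst.le_mulVec (fun v => hmin v (Finset.mem_univ v)) xm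
        have := heq xm; linarith
      have hg0 : g = 0 := le_antisymm hgle hgge
      have hbh : P *ᵥ b = b := by
        funext x; have := heq x; rw [hg0] at this; linarith
      have hbc : ∀ z, b z = b xm := fun z => harmonic_const hst hirr hbh z xm
      rw [Submodule.mem_span_singleton]
      refine ⟨b xm, ?_⟩
      rw [hg0]
      ext x
      · simp [hone, hbc x]
      · simp
    · rw [Submodule.span_le, Set.singleton_subset_iff]
      rw [SetLike.mem_coe, LinearMap.mem_ker]
      funext x
      have := hPhiApp (one, 0) x
      rw [this, hPone]
      simp
  have hne : ((one, 0) : (S → ℝ) × ℝ) ≠ 0 := by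
    intro hcon
    have := congrFun (congrArg Prod.fst hcon) (Classical.arbitrary S)
    simp [hone] at this
  have hkerrank : Module.finrank ℝ (LinearMap.ker Φ) = 1 := by
    rw [hker]; exact finrank_span_singleton hne
  have hdom : Module.finrank ℝ ((S → ℝ) × ℝ) = Fintype.card S + 1 := by
    rw [Module.finrank_prod, Module.finrank_self, Module.finrank_pi]
  have hcodom : Module.finrank ℝ (S → ℝ) = Fintype.card S := Module.finrank_pi ℝ
  have hrange : LinearMap.range Φ = ⊤ := by
    apply Submodule.eq_top_of_finrank_eq
    have := LinearMap.finrank_range_add_finrank_ker Φ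
    rw [hkerrank, hdom] at this
    rw [hcodom]
    omega
  have hmem : rv ∈ LinearMap.range Φ := hrange ▸ Submodule.mem_top
  obtain ⟨⟨b, g⟩, hbg⟩ := hmem
  refine ⟨g, b, fun x => ?_⟩
  have := (hPhiApp (b, g) x).symm.trans (congrFun hbg x)
  simp at this
  linarith

lemma sum_ite_zero' (f : S → ℝ) (x₀ : S) :
    ∑ w, (if w = x₀ then 0 else f w) = (∑ w, f w) - f x₀ := by
  have h1 : ∑ w ∈ Finset.univ.erase x₀, (if w = x₀ then 0 else f w)
      + (if x₀ = x₀ then (0:ℝ) else f x₀)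
      = ∑ w, (if w = x₀ then 0 else f w) :=
    Finset.sum_erase_add _ _ (Finset.mem_univ x₀)
  have h2 : ∑ w ∈ Finset.univ.erase x₀, f w + f x₀ = ∑ w, f w :=
    Finset.sum_erase_add _ _ (Finset.mem_univ x₀)
  have h3 : ∑ w ∈ Finset.univ.erase x₀, (if w = x₀ then 0 else f w)
      = ∑ w ∈ Finset.univ.erase x₀, f w :=
    Finset.sum_congr rfl (fun w hw => if_neg (Finset.ne_of_mem_erase hw))
  rw [if_pos rfl, add_zero, h3] at h1
  linarith

lemma sum_range_add' (f : ℕ → ℝ) (a b : ℕ) :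
    ∑ m ∈ Finset.range (a + b), f m
      = ∑ m ∈ Finset.range a, f m + ∑ i ∈ Finset.range b, f (a + i) := by
  induction b with
  | zero => simp
  | succ b ih => rw [← Nat.add_assoc, Finset.sum_range_succ, ih, Finset.sum_range_succ]; ring

section Renewal
variable [Fintype A] [Nonempty A]

/-- Uniform hitting bound extracted from ergodicity. -/
lemma uniform_hit (p : S → A → S → ℝ)
    (hp : ∀ x a, (∀ y, 0 ≤ p x a y) ∧ ∑ y, p x a y = 1) (herg : IsErgodic p) :
    ∃ n₀ : ℕ, 0 < n₀ ∧ ∃ δ : ℝ, 0 < δ ∧ δ ≤ 1 ∧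
      ∀ (h : S → A) (z y : S), ∃ m : ℕ, 0 < m ∧ m ≤ n₀ ∧ δ ≤ ((transMatrix p h) ^ m) z y := by
  classical
  have hch : ∀ i : (S → A) × S × S, ∃ m : ℕ, 0 < m ∧
      0 < ((transMatrix p i.1) ^ m) i.2.1 i.2.2 := fun i => herg i.1 i.2.1 i.2.2
  choose mf hm1 hm2 using hch
  have hne : (Finset.univ : Finset ((S → A) × S × S)).Nonempty := Finset.univ_nonempty
  refine ⟨Finset.univ.sup mf, ?_, Finset.univ.inf' hne
    (fun i => ((transMatrix p i.1) ^ (mf i)) i.2.1 i.2.2), ?_, ?_, ?_⟩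
  · obtain ⟨i⟩ := (inferInstance : Nonempty ((S → A) × S × S))
    exact lt_of_lt_of_le (hm1 i) (Finset.le_sup (Finset.mem_univ i))
  · rw [Finset.lt_inf'_iff]
    exact fun i _ => hm2 i
  · obtain ⟨i₀, _, hle⟩ := Finset.exists_mem_eq_inf' hne
      (fun i => ((transMatrix p i.1) ^ (mf i)) i.2.1 i.2.2)
    rw [hle]
    exact entry_le_one ((transMatrix_stoch p hp i₀.1).pow (mf i₀)) _ _
  · intro h z y
    refine ⟨mf (h, z, y), hm1 _, Finset.le_sup (Finset.mem_univ _), ?_⟩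
    exact Finset.inf'_le _ (Finset.mem_univ _)

/-- Renewal-type lower bound: the expected number of visits to `x₀` grows
linearly, provided all rows except possibly the one at `x₀` come from the
ergodic kernel `p`. -/
lemma renewal (p : S → A → S → ℝ)
    (hp : ∀ x a, (∀ y, 0 ≤ p x a y) ∧ ∑ y, p x a y = 1) (herg : IsErgodic p)
    (P : Matrix S S ℝ) (hPst : Stoch P) (h' : S → A) (x₀ : S)
    (hrows : ∀ z, z ≠ x₀ → ∀ w, P z w = p z (h' z) w) :
    ∃ c : ℝ, 0 < c ∧ ∀ n : ℕ, c * n ≤ ∑ k ∈ Finset.range n, (P ^ k) x₀ x₀ := by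
  classical
  obtain ⟨n₀, hn₀, δ, hδ, hδ1, hhit⟩ := uniform_hit p hp herg
  set M' := transMatrix p h' with hM'
  have hM'st : Stoch M' := transMatrix_stoch p hp h'
  set mone : S → ℝ := fun _ => 1 with hmone
  set Q : Matrix S S ℝ := fun z w => if z = x₀ ∨ w = x₀ then 0 else M' z w with hQ
  have hQentry : ∀ i j, Q i j = if i = x₀ ∨ j = x₀ then 0 else M' i j := fun i j => rfl
  have hQnn : ∀ i j, 0 ≤ Q i j := by
    intro i j; rw [hQentry]; split
    · exact le_refl 0
    · exact hM'st.1 i j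
  have hQsub : SubStoch Q := by
    refine ⟨hQnn, fun i => ?_⟩
    calc ∑ j, Q i j ≤ ∑ j, M' i j := by
          refine Finset.sum_le_sum fun j _ => ?_
          rw [hQentry]; split
          · exact hM'st.1 i j
          · exact le_refl _
      _ = 1 := hM'st.2 i
  have hQm_nn : ∀ m z, 0 ≤ ((Q ^ m) *ᵥ mone) z := fun m z =>
    mulVec_nonneg (hQsub.pow m).1 (fun _ => by norm_num) z
  have hQm_le1 : ∀ m z, ((Q ^ m) *ᵥ mone) z ≤ 1 := by
    intro m z
    have h1 : ((Q ^ m) *ᵥ mone) z = ∑ w, (Q ^ m) z w := by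
      simp [mulVec_apply', hmone]
    rw [h1]; exact (hQsub.pow m).2 z
  have hQrow : ∀ w, Q x₀ w = 0 := fun w => if_pos (Or.inl rfl)
  have hq3 : ∀ m, 0 < m → ((Q ^ m) *ᵥ mone) x₀ = 0 := by
    intro m hm
    obtain ⟨m', rfl⟩ : ∃ m', m = m' + 1 := ⟨m - 1, by omega⟩
    rw [pow_succ', ← Matrix.mulVec_mulVec]
    simp [mulVec_apply', hQrow]
  have hmono : ∀ (a b : ℕ) (z : S), ((Q ^ (a + b)) *ᵥ mone) z ≤ ((Q ^ a) *ᵥ mone) z := by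
    intro a b z
    rw [pow_add, ← Matrix.mulVec_mulVec]
    exact mulVec_mono (hQsub.pow a).1 (hQm_le1 b) z
  have hq2 : ∀ m, ∀ z, z ≠ x₀ → ((Q ^ m) *ᵥ mone) z ≤ 1 - (M' ^ m) z x₀ := by
    intro m
    induction m with
    | zero =>
      intro z hz
      simp [Matrix.one_mulVec, hmone, Matrix.one_apply_ne hz]
    | succ m ih =>
      intro z hz
      rw [pow_succ', ← Matrix.mulVec_mulVec]
      have hstep : (Q *ᵥ ((Q ^ m) *ᵥ mone)) z
          ≤ ∑ w, (if w = x₀ then 0 else M' z w * (1 - (M' ^ m) w x₀)) := by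
        rw [mulVec_apply']
        refine Finset.sum_le_sum fun w _ => ?_
        by_cases hw : w = x₀
        · subst hw
          rw [if_pos rfl, hQentry, if_pos (Or.inr rfl), zero_mul]
        · rw [if_neg hw, hQentry, if_neg (by tauto)]
          exact mul_le_mul_of_nonneg_left (ih w hw) (hM'st.1 z w)
      rw [sum_ite_zero' (fun w => M' z w * (1 - (M' ^ m) w x₀)) x₀] at hstep
      have hexp : ∑ w, M' z w * (1 - (M' ^ m) w x₀)
          = 1 - ∑ w, M' z w * (M' ^ m) w x₀ := by
        have h1 : ∀ w, M' z w * (1 - (M' ^ m) w x₀)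
            = M' z w - M' z w * (M' ^ m) w x₀ := fun w => by ring
        rw [Finset.sum_congr rfl (fun w _ => h1 w), Finset.sum_sub_distrib, hM'st.2 z]
      have hpow : (M' ^ (m+1)) z x₀ = ∑ w, M' z w * (M' ^ m) w x₀ := by
        rw [pow_succ', Matrix.mul_apply]
      have hlast : 0 ≤ M' z x₀ * (1 - (M' ^ m) x₀ x₀) :=
        mul_nonneg (hM'st.1 z x₀) (by linarith [entry_le_one (hM'st.pow m) x₀ x₀])
      rw [hexp] at hstep
      rw [hpow]
      linarith
  have hq4 : ∀ z, ((Q ^ n₀) *ᵥ mone) z ≤ 1 - δ := by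
    intro z
    by_cases hz : z = x₀
    · subst hz; rw [hq3 n₀ hn₀]; linarith
    · obtain ⟨m, hm0, hmn, hmδ⟩ := hhit h' z x₀
      have h1 : ((Q ^ n₀) *ᵥ mone) z ≤ ((Q ^ m) *ᵥ mone) z := by
        have hsplit : n₀ = m + (n₀ - m) := by omega
        rw [hsplit]; exact hmono m (n₀ - m) z
      have h2 := hq2 m z hz
      rw [← hM'] at hmδ
      linarith
  have hq5 : ∀ j : ℕ, ∀ z, ((Q ^ (n₀ * j)) *ᵥ mone) z ≤ (1 - δ) ^ j := by
    intro j
    induction j with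
    | zero => intro z; simpa using hQm_le1 0 z
    | succ j ih =>
      intro z
      have hsplit : n₀ * (j+1) = n₀ + n₀ * j := by ring
      rw [hsplit, pow_add, ← Matrix.mulVec_mulVec]
      have h1 : ((Q ^ n₀) *ᵥ ((Q ^ (n₀ * j)) *ᵥ mone)) z
          ≤ ((Q ^ n₀) *ᵥ (fun _ => (1-δ)^j)) z :=
        mulVec_mono (hQsub.pow n₀).1 (fun w => ih w) z
      have h2 : ((Q ^ n₀) *ᵥ (fun _ => (1-δ)^j)) z
          = (∑ w, (Q ^ n₀) z w) * (1-δ)^j := by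
        rw [mulVec_apply', Finset.sum_mul]
      have h3 : (∑ w, (Q ^ n₀) z w) ≤ 1 - δ := by
        have := hq4 z
        have h4 : ((Q ^ n₀) *ᵥ mone) z = ∑ w, (Q ^ n₀) z w := by
          simp [mulVec_apply', hmone]
        linarith [h4 ▸ this]
      have h5 : (0:ℝ) ≤ (1-δ)^j := pow_nonneg (by linarith) j
      have h6 : (∑ w, (Q ^ n₀) z w) * (1-δ)^j ≤ (1-δ) * (1-δ)^j := by
        have hnn : 0 ≤ ∑ w, (Q ^ n₀) z w :=
          Finset.sum_nonneg fun w _ => (hQsub.pow n₀).1 z w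
        exact mul_le_mul_of_nonneg_right h3 h5
      rw [pow_succ']
      linarith
  have hgeom : ∀ J : ℕ, (0:ℝ) ≤ ∑ j ∈ Finset.range J, (1-δ)^j
      ∧ ∑ j ∈ Finset.range J, (1-δ)^j ≤ 1/δ := by
    intro J
    induction J with
    | zero => constructor <;> simp <;> positivity
    | succ J ih =>
      constructor
      · refine Finset.sum_nonneg fun j _ => pow_nonneg (by linarith) j
      · rw [Finset.sum_range_succ']
        have h1 : ∑ j ∈ Finset.range J, (1-δ)^(j+1)
            = (1-δ) * ∑ j ∈ Finset.range J, (1-δ)^j := by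
          rw [Finset.mul_sum]
          exact Finset.sum_congr rfl fun j _ => by rw [pow_succ']
        rw [h1, pow_zero]
        have h2 : (1-δ) * ∑ j ∈ Finset.range J, (1-δ)^j ≤ (1-δ) * (1/δ) :=
          mul_le_mul_of_nonneg_left ih.2 (by linarith)
        have h4 : (1-δ) * (1/δ) + 1 = 1/δ := by field_simp; ring
        linarith
  obtain ⟨J, hJ⟩ := exists_pow_lt_of_lt_one (show (0:ℝ) < 1/2 by norm_num)
    (show 1 - δ < 1 by linarith)
  have hJ1 : 0 < J := by
    rcases Nat.eq_zero_or_pos J with h0 | h1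
    · subst h0; norm_num at hJ
    · exact h1
  set K := n₀ * J with hK
  have hK1 : 0 < K := Nat.mul_pos hn₀ hJ1
  have hQK : ∀ z, ((Q ^ K) *ᵥ mone) z ≤ 1/2 := fun z => (hq5 J z).trans hJ.le
  set cK : S → ℝ := fun z => ∑ m ∈ Finset.range K, ((Q ^ m) *ᵥ mone) z with hcK
  set C₀ : ℝ := n₀ * (1/δ) with hC₀
  have hn₀R : (0:ℝ) < n₀ := by exact_mod_cast hn₀
  have hC₀pos : 0 < C₀ := by rw [hC₀]; positivity
  have hcKle : ∀ z, cK z ≤ C₀ := by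
    intro z
    have hblock : ∀ J' : ℕ, ∑ m ∈ Finset.range (n₀ * J'), ((Q ^ m) *ᵥ mone) z
        ≤ n₀ * ∑ j ∈ Finset.range J', (1-δ)^j := by
      intro J'
      induction J' with
      | zero => simp
      | succ J' ih =>
        have hsplit : n₀ * (J'+1) = n₀ * J' + n₀ := by ring
        rw [hsplit, sum_range_add' (fun m => ((Q ^ m) *ᵥ mone) z) (n₀*J') n₀,
          Finset.sum_range_succ]
        have hterm : ∀ i ∈ Finset.range n₀, ((Q ^ (n₀ * J' + i)) *ᵥ mone) z ≤ (1-δ)^J' :=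
          fun i _ => le_trans (hmono (n₀*J') i z) (hq5 J' z)
        have hblk : ∑ i ∈ Finset.range n₀, ((Q ^ (n₀ * J' + i)) *ᵥ mone) z
            ≤ n₀ * (1-δ)^J' := by
          calc _ ≤ ∑ _i ∈ Finset.range n₀, (1-δ)^J' := Finset.sum_le_sum hterm
            _ = n₀ * (1-δ)^J' := by
                rw [Finset.sum_const, Finset.card_range, nsmul_eq_mul]
        have hdist : (n₀:ℝ) * (∑ j ∈ Finset.range J', (1-δ)^j + (1-δ)^J')
            = n₀ * ∑ j ∈ Finset.range J', (1-δ)^j + n₀ * (1-δ)^J' := by ring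
        rw [hdist]
        linarith
    calc cK z ≤ n₀ * ∑ j ∈ Finset.range J, (1-δ)^j := hblock J
      _ ≤ n₀ * (1/δ) := mul_le_mul_of_nonneg_left (hgeom J).2 (Nat.cast_nonneg n₀)
  have hcKnn : ∀ z, 0 ≤ cK z := fun z => Finset.sum_nonneg fun m _ => hQm_nn m z
  have hcKx₀ : cK x₀ = 1 := by
    show ∑ m ∈ Finset.range K, ((Q ^ m) *ᵥ mone) x₀ = 1
    rw [Finset.sum_eq_single 0]
    · simp [Matrix.one_mulVec, hmone]
    · intro m _ hm0; exact hq3 m (Nat.pos_of_ne_zero hm0)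
    · intro h0; exact absurd (Finset.mem_range.2 hK1) h0
  set e : S → ℝ := fun z => if z = x₀ then 1 else 0 with he
  set c : S → ℝ := fun z => cK z - e z with hc
  have hex₀ : e x₀ = 1 := if_pos rfl
  have hcx₀ : c x₀ = 0 := by rw [hc]; dsimp only; rw [hcKx₀, hex₀]; ring
  have hcnn : ∀ z, 0 ≤ c z := by
    intro z
    by_cases hz : z = x₀
    · subst hz; rw [hcx₀]
    · rw [hc]; dsimp only; rw [he]; dsimp only; rw [if_neg hz]
      have := hcKnn z; linarith
  have hcle : ∀ z, c z ≤ C₀ := by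
    intro z
    have h1 : c z ≤ cK z := by
      rw [hc]; dsimp only
      have : (0:ℝ) ≤ e z := by rw [he]; dsimp only; split <;> norm_num
      linarith
    exact h1.trans (hcKle z)
  -- one-step drift inequality
  have key : ∀ z, (P *ᵥ c) z ≤ c z - 1/2 + (C₀ + 1/2) * e z := by
    intro z
    by_cases hz : z = x₀
    · rw [hz, hcx₀, hex₀]
      have h1 : (P *ᵥ c) x₀ ≤ C₀ := hPst.mulVec_le hcle x₀
      linarith
    · have hez : e z = 0 := by rw [he]; exact if_neg hz
      have hQz : ∀ w, Q z w = if w = x₀ then 0 else M' z w := by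
        intro w
        rw [hQentry]
        by_cases hw : w = x₀
        · rw [if_pos (Or.inr hw), if_pos hw]
        · rw [if_neg (by tauto), if_neg hw]
      have hPc : (P *ᵥ c) z = (Q *ᵥ cK) z := by
        rw [mulVec_apply', mulVec_apply']
        have hLHS : ∑ w, P z w * c w = (∑ w, M' z w * cK w) - M' z x₀ := by
          have h1 : ∀ w, P z w * c w = M' z w * cK w - M' z w * e w := by
            intro w
            have hPM : P z w = M' z w := by rw [hM']; exact hrows z hz w
            rw [hPM, hc]; dsimp only; ring
          rw [Finset.sum_congr rfl (fun w _ => h1 w), Finset.sum_sub_distrib]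
          congr 1
          have h2 : ∀ w, M' z w * e w = if w = x₀ then M' z w else 0 := by
            intro w; rw [he]; dsimp only; split <;> simp
          rw [Finset.sum_congr rfl (fun w _ => h2 w), Finset.sum_ite_eq' Finset.univ x₀]
          simp
        have hRHS : ∑ w, Q z w * cK w = (∑ w, M' z w * cK w) - M' z x₀ * cK x₀ := by
          have h1 : ∀ w, Q z w * cK w = if w = x₀ then 0 else M' z w * cK w := by
            intro w; rw [hQz w]; split <;> simp
          rw [Finset.sum_congr rfl (fun w _ => h1 w),
            sum_ite_zero' (fun w => M' z w * cK w) x₀]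
        rw [hLHS, hRHS, hcKx₀, mul_one]
      have hQcK : (Q *ᵥ cK) z = cK z - 1 + ((Q ^ K) *ᵥ mone) z := by
        have hfun : cK = ∑ m ∈ Finset.range K, ((Q ^ m) *ᵥ mone) := by
          funext w; rw [hcK]; rw [Finset.sum_apply]
        have h1 : Q *ᵥ cK = ∑ m ∈ Finset.range K, ((Q ^ (m+1)) *ᵥ mone) := by
          rw [hfun, mulVec_sum_range]
          apply Finset.sum_congr rfl
          intro m _
          rw [Matrix.mulVec_mulVec, ← pow_succ']
        have h2 : ∑ m ∈ Finset.range (K+1), ((Q ^ m) *ᵥ mone) z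
            = ∑ m ∈ Finset.range K, ((Q ^ (m+1)) *ᵥ mone) z + ((Q ^ 0) *ᵥ mone) z :=
          Finset.sum_range_succ' (fun m => ((Q ^ m) *ᵥ mone) z) K
        have h3 : ∑ m ∈ Finset.range (K+1), ((Q ^ m) *ᵥ mone) z
            = cK z + ((Q ^ K) *ᵥ mone) z := by
          rw [Finset.sum_range_succ]
        have h4 : ((Q ^ 0) *ᵥ mone) z = 1 := by simp [Matrix.one_mulVec, hmone]
        have h5 := congrFun h1 z
        rw [Finset.sum_apply] at h5
        rw [h5]
        rw [h4] at h2
        linarith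
      rw [hPc, hQcK, hez, hc]
      dsimp only
      rw [he]; dsimp only; rw [if_neg hz]
      have := hQK z
      linarith
  -- iterate the drift inequality
  have iter : ∀ n : ℕ, ∀ z, ((P ^ n) *ᵥ c) z
      ≤ c z - n * (1/2) + (C₀ + 1/2) * ∑ k ∈ Finset.range n, ((P ^ k) *ᵥ e) z := by
    intro n
    induction n with
    | zero => intro z; simp [Matrix.one_mulVec]
    | succ n ih =>
      intro z
      have hpow : (P ^ (n+1)) *ᵥ c = (P ^ n) *ᵥ (P *ᵥ c) := by
        rw [Matrix.mulVec_mulVec, ← pow_succ]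
      rw [hpow]
      have h1 : ((P ^ n) *ᵥ (P *ᵥ c)) z
          ≤ ((P ^ n) *ᵥ (fun w => c w - 1/2 + (C₀ + 1/2) * e w)) z :=
        mulVec_mono (hPst.pow n).1 key z
      have h2 : ((P ^ n) *ᵥ (fun w => c w - 1/2 + (C₀ + 1/2) * e w)) z
          = ((P ^ n) *ᵥ c) z - 1/2 + (C₀ + 1/2) * ((P ^ n) *ᵥ e) z := by
        rw [mulVec_apply', mulVec_apply', mulVec_apply']
        have h3 : ∀ w, (P ^ n) z w * (c w - 1/2 + (C₀ + 1/2) * e w)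
            = (P ^ n) z w * c w - (P ^ n) z w * (1/2)
              + (C₀ + 1/2) * ((P ^ n) z w * e w) := by intro w; ring
        rw [Finset.sum_congr rfl (fun w _ => h3 w)]
        rw [Finset.sum_add_distrib, Finset.sum_sub_distrib, ← Finset.sum_mul,
          ← Finset.mul_sum, (hPst.pow n).2 z, one_mul]
      rw [h2] at h1
      have h4 := ih z
      rw [Finset.sum_range_succ]
      push_cast
      linarith
  -- conclude
  refine ⟨(1/2) / (C₀ + 1/2), by positivity, fun n => ?_⟩
  have h0 : 0 ≤ ((P ^ n) *ᵥ c) x₀ := mulVec_nonneg (hPst.pow n).1 hcnn x₀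
  have h1 := iter n x₀
  rw [hcx₀] at h1
  have hsum_eq : ∀ k : ℕ, ((P ^ k) *ᵥ e) x₀ = (P ^ k) x₀ x₀ := by
    intro k
    rw [mulVec_apply']
    have h2 : ∀ w, (P ^ k) x₀ w * e w = if w = x₀ then (P ^ k) x₀ w else 0 := by
      intro w; rw [he]; dsimp only; split <;> simp
    rw [Finset.sum_congr rfl (fun w _ => h2 w), Finset.sum_ite_eq' Finset.univ x₀]
    simp
  rw [Finset.sum_congr rfl (fun k _ => hsum_eq k)] at h1
  rw [div_mul_eq_mul_div, div_le_iff₀ (by positivity)]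
  nlinarith [h0, h1]

end Renewal

section Opt
variable [Fintype A] [Nonempty A]

lemma mulVec_ite (M : Matrix S S ℝ) (x : S) (ε : ℝ) :
    ∀ z, (M *ᵥ (fun w => if w = x then ε else 0)) z = ε * M z x := by
  intro z
  rw [mulVec_apply']
  have h : ∀ w, M z w * (if w = x then ε else 0) = if w = x then ε * M z w else 0 := by
    intro w; split
    · ring
    · ring
  rw [Finset.sum_congr rfl (fun w _ => h w), Finset.sum_ite_eq' Finset.univ x]
  simp

/-- Any policy of an ergodic MDP has constant gain, equal to the scalar in any
solution of its policy-evaluation equation. -/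
lemma gain_eq_eval (p : S → A → S → ℝ) (r : S → A → ℝ)
    (hp : ∀ x a, (∀ y, 0 ≤ p x a y) ∧ ∑ y, p x a y = 1)
    (h : S → A) (g : ℝ) (b : S → ℝ)
    (heval : ∀ x, r x (h x) + ((transMatrix p h) *ᵥ b) x = g + b x) :
    ∀ x, gain p r h x = g := by
  intro x
  set Bh := Finset.univ.sup' Finset.univ_nonempty (fun z => |b z|) with hBh
  have hb : ∀ z, |b z| ≤ Bh := fun z => Finset.le_sup' (fun z => |b z|) (Finset.mem_univ z)
  have hbell : ∀ x', r x' (h x') = g + b x' - ((transMatrix p h) *ᵥ b) x' + (0:S→ℝ) x' := by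
    intro x'; have := heval x'; simp only [Pi.zero_apply, add_zero]; linarith
  have hv := valueIter_eq_of_eval p r h hp g b 0 hbell
  apply gain_eq_of_bound p r h x g (2 * Bh)
  intro n
  rw [congrFun (hv n) x]
  simp only [Matrix.mulVec_zero, Pi.zero_apply, Finset.sum_const_zero, add_zero]
  have hst := transMatrix_stoch p hp h
  have h1 : |((transMatrix p h ^ n) *ᵥ b) x| ≤ Bh := by
    rw [abs_le]
    constructor
    · exact (hst.pow n).le_mulVec (fun z => (abs_le.1 (hb z)).1) x
    · exact (hst.pow n).mulVec_le (fun z => (abs_le.1 (hb z)).2) x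
  have h2 := abs_le.1 (hb x)
  have h3 := abs_le.1 h1
  rw [abs_le]
  constructor <;> nlinarith [h2.1, h2.2, h3.1, h3.2]

/-- Existence of a solution of the average-reward optimality equation for an
ergodic MDP, together with an optimal policy. -/
lemma exists_opt (p : S → A → S → ℝ) (r : S → A → ℝ)
    (hp : ∀ x a, (∀ y, 0 ≤ p x a y) ∧ ∑ y, p x a y = 1)
    (hr : ∀ x a, r x a ∈ Set.Icc (0:ℝ) 1) (herg : IsErgodic p) :
    ∃ (G : ℝ) (b : S → ℝ) (hstar : S → A) (B : ℝ), 0 ≤ B ∧ (∀ x, |b x| ≤ B) ∧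
      (∀ x a, r x a + ∑ y, p x a y * b y ≤ G + b x) ∧
      (∀ x, r x (hstar x) + ∑ y, p x (hstar x) y * b y = G + b x) ∧
      (∀ h : S → A, ∀ x, gain p r h x ≤ G) ∧ (∀ x, gain p r hstar x = G) := by
  classical
  -- policy evaluation for every policy
  have key : ∀ h : S → A, ∃ gb : ℝ × (S → ℝ),
      (∀ x, r x (h x) + ((transMatrix p h) *ᵥ gb.2) x = gb.1 + gb.2 x)
      ∧ (∀ x, gain p r h x = gb.1) := by
    intro h
    obtain ⟨g, b, heval⟩ := exists_eval (transMatrix_stoch p hp h) (herg h)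
      (fun x => r x (h x))
    exact ⟨(g, b), heval, gain_eq_eval p r hp h g b heval⟩
  choose gb hev hgn using key
  obtain ⟨hstar, _, hmax⟩ := Finset.exists_max_image Finset.univ (fun h => (gb h).1)
    Finset.univ_nonempty
  set G := (gb hstar).1 with hG
  set b := (gb hstar).2 with hb
  set B := Finset.univ.sup' Finset.univ_nonempty (fun z => |b z|) with hB
  have hbB : ∀ z, |b z| ≤ B := fun z => Finset.le_sup' (fun z => |b z|) (Finset.mem_univ z)
  have hB0 : 0 ≤ B := le_trans (abs_nonneg _) (hbB (Classical.arbitrary S))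
  have hgainle : ∀ h : S → A, ∀ x, gain p r h x ≤ G := by
    intro h x
    rw [hgn h x]
    exact hmax h (Finset.mem_univ h)
  have heq : ∀ x, r x (hstar x) + ∑ y, p x (hstar x) y * b y = G + b x := by
    intro x
    have := hev hstar x
    rwa [mulVec_apply'] at this
  -- the optimality inequality, by policy improvement + renewal
  have hineq : ∀ x a, r x a + ∑ y, p x a y * b y ≤ G + b x := by
    intro x a
    by_contra hcon
    push_neg at hcon
    set ε := r x a + ∑ y, p x a y * b y - (G + b x) with hε
    have hεpos : 0 < ε := by rw [hε]; linarith
    set h' := Function.update hstar x a with hh'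
    set P' := transMatrix p h' with hP'
    have hP'st : Stoch P' := transMatrix_stoch p hp h'
    set d : S → ℝ := fun z => if z = x then ε else 0 with hd
    have hbell : ∀ z, r z (h' z) = G + b z - (P' *ᵥ b) z + d z := by
      intro z
      by_cases hz : z = x
      · subst hz
        have ha : h' z = a := Function.update_self z a hstar
        rw [ha, hd]
        simp only [if_pos rfl]
        have hPb : (P' *ᵥ b) z = ∑ y, p z a y * b y := by
          rw [mulVec_apply']
          exact Finset.sum_congr rfl fun y _ => by rw [hP', transMatrix, ha]
        rw [hPb, hε]
        simp only [if_true]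
        ring
      · have hz' : h' z = hstar z := Function.update_of_ne hz a hstar
        have hPb : (P' *ᵥ b) z = ∑ y, p z (hstar z) y * b y := by
          rw [mulVec_apply']
          exact Finset.sum_congr rfl fun y _ => by rw [hP', transMatrix, hz']
        rw [hz', hPb, hd]
        simp only [if_neg hz, add_zero]
        have := heq z
        linarith
    obtain ⟨c, hc, hcount⟩ := renewal p hp herg P' hP'st h' x
      (fun z _ w => by rw [hP', transMatrix])
    have hv := valueIter_eq_of_eval p r h' hp G b d hbell
    have hlow : ∀ n : ℕ, n * (G + ε * c) - 2 * B ≤ valueIter p r h' n x := by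
      intro n
      rw [congrFun (hv n) x]
      have hdsum : ∀ k : ℕ, ((P' ^ k) *ᵥ d) x = ε * (P' ^ k) x x := fun k =>
        mulVec_ite (P' ^ k) x ε x
      rw [Finset.sum_congr rfl (fun k _ => hdsum k), ← Finset.mul_sum]
      have h1 : |((P' ^ n) *ᵥ b) x| ≤ B := by
        rw [abs_le]
        constructor
        · exact (hP'st.pow n).le_mulVec (fun z => (abs_le.1 (hbB z)).1) x
        · exact (hP'st.pow n).mulVec_le (fun z => (abs_le.1 (hbB z)).2) x
      have h2 := abs_le.1 (hbB x)
      have h3 := abs_le.1 h1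
      have h4 : c * n ≤ ∑ k ∈ Finset.range n, (P' ^ k) x x := hcount n
      have h5 : ε * (c * n) ≤ ε * ∑ k ∈ Finset.range n, (P' ^ k) x x :=
        mul_le_mul_of_nonneg_left h4 hεpos.le
      nlinarith [h2.1, h2.2, h3.1, h3.2]
    have hup : ∀ n : ℕ, valueIter p r h' n x ≤ n :=
      fun n => valueIter_le_n p r h' hp (fun x a => (hr x a).2) n x
    have hge : G + ε * c ≤ gain p r h' x :=
      le_gain_of_bound p r h' x (G + ε * c) (2 * B) hup hlow
    have hle : gain p r h' x ≤ G := hgainle h' x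
    nlinarith [mul_pos hεpos hc]
  exact ⟨G, b, hstar, B, hB0, hbB, hineq, heq, hgainle,
    gain_eq_eval p r hp hstar G b (hev hstar)⟩

end Opt

section Side
variable [Fintype A] [Nonempty A] [DecidableEq A]

/-- If some pair in `U` strictly violates the optimality inequality of `φ`,
then no `φ`-optimal policy avoiding `U` can be optimal for the `U`-perturbed MDP. -/
lemma side (p pbar : S → A → S → ℝ) (r rbar : S → A → ℝ)
    (hp : ∀ x a, (∀ y, 0 ≤ p x a y) ∧ ∑ y, p x a y = 1)
    (hpbar : ∀ x a, (∀ y, 0 ≤ pbar x a y) ∧ ∑ y, pbar x a y = 1)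
    (hr : ∀ x a, r x a ∈ Set.Icc (0:ℝ) 1)
    (hrbar : ∀ x a, rbar x a ∈ Set.Icc (0:ℝ) 1)
    (herg : IsErgodic p)
    (U : Finset (S × A))
    (G : ℝ) (b : S → ℝ) (hstar : S → A) (B : ℝ) (hbB : ∀ x, |b x| ≤ B)
    (heq : ∀ x, r x (hstar x) + ∑ y, p x (hstar x) y * b y = G + b x)
    (hgainle : ∀ h : S → A, ∀ x, gain p r h x ≤ G)
    (havoidstar : ∀ z, (z, hstar z) ∉ U)
    (x₀ : S) (a₀ : A) (hmem : (x₀, a₀) ∈ U)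
    (hgt : G + b x₀ < rbar x₀ a₀ + ∑ y, pbar x₀ a₀ y * b y)
    (f₁ : S → A)
    (hf₁avoid : ∀ z, (z, f₁ z) ∉ U)
    (hf₁gle : ∀ x, gain p r f₁ x ≤ G)
    (hf₁ψ : f₁ ∈ OptPolicies (perturbP U p pbar) (perturbR U r rbar)) : False := by
  classical
  set q := perturbP U p pbar with hq
  set rq := perturbR U r rbar with hrq
  have hqst : ∀ x a, (∀ y, 0 ≤ q x a y) ∧ ∑ y, q x a y = 1 :=
    perturb_stoch U p pbar hp hpbar
  have hrq01 : ∀ x a, rq x a ∈ Set.Icc (0:ℝ) 1 := perturb_rew U r rbar hr hrbar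
  set h := Function.update hstar x₀ a₀ with hh
  set P := transMatrix q h with hP
  have hPst : Stoch P := transMatrix_stoch q hqst h
  set ε := rbar x₀ a₀ + ∑ y, pbar x₀ a₀ y * b y - (G + b x₀) with hε
  have hεpos : 0 < ε := by rw [hε]; linarith
  set d : S → ℝ := fun z => if z = x₀ then ε else 0 with hd
  have hbell : ∀ z, rq z (h z) = G + b z - (P *ᵥ b) z + d z := by
    intro z
    by_cases hz : z = x₀
    · subst hz
      have ha : h z = a₀ := Function.update_self z a₀ hstar
      have e1 : rq z (h z) = rbar z a₀ := by
        rw [ha, hrq]; exact if_pos hmem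
      have e2 : (P *ᵥ b) z = ∑ y, pbar z a₀ y * b y := by
        rw [mulVec_apply']
        refine Finset.sum_congr rfl fun y _ => ?_
        rw [hP, transMatrix, ha, hq]
        rw [show perturbP U p pbar z a₀ y = pbar z a₀ y from by
          unfold perturbP; exact if_pos hmem]
      rw [e1, e2, hd]
      simp only [if_pos rfl, if_true]
      rw [hε]
      ring
    · have hz' : h z = hstar z := Function.update_of_ne hz a₀ hstar
      have e1 : rq z (h z) = r z (hstar z) := by
        rw [hz', hrq]; unfold perturbR; exact if_neg (havoidstar z)
      have e2 : (P *ᵥ b) z = ∑ y, p z (hstar z) y * b y := by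
        rw [mulVec_apply']
        refine Finset.sum_congr rfl fun y _ => ?_
        rw [hP, transMatrix, hz', hq]
        rw [show perturbP U p pbar z (hstar z) y = p z (hstar z) y from by
          unfold perturbP; exact if_neg (havoidstar z)]
      rw [e1, e2, hd]
      simp only [if_neg hz, add_zero]
      have := heq z
      linarith
  have hrows : ∀ z, z ≠ x₀ → ∀ w, P z w = p z (hstar z) w := by
    intro z hz w
    have hz' : h z = hstar z := Function.update_of_ne hz a₀ hstar
    rw [hP, transMatrix, hz', hq]
    unfold perturbP; exact if_neg (havoidstar z)
  obtain ⟨c, hc, hcount⟩ := renewal p hp herg P hPst hstar x₀ hrows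
  have hv := valueIter_eq_of_eval q rq h hqst G b d hbell
  have hlow : ∀ n : ℕ, n * (G + ε * c) - 2 * B ≤ valueIter q rq h n x₀ := by
    intro n
    rw [congrFun (hv n) x₀]
    have hdsum : ∀ k : ℕ, ((P ^ k) *ᵥ d) x₀ = ε * (P ^ k) x₀ x₀ := fun k =>
      mulVec_ite (P ^ k) x₀ ε x₀
    rw [Finset.sum_congr rfl (fun k _ => hdsum k), ← Finset.mul_sum]
    have h1 : |((P ^ n) *ᵥ b) x₀| ≤ B := by
      rw [abs_le]
      constructor
      · exact (hPst.pow n).le_mulVec (fun z => (abs_le.1 (hbB z)).1) x₀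
      · exact (hPst.pow n).mulVec_le (fun z => (abs_le.1 (hbB z)).2) x₀
    have h2 := abs_le.1 (hbB x₀)
    have h3 := abs_le.1 h1
    have h5 : ε * (c * n) ≤ ε * ∑ k ∈ Finset.range n, (P ^ k) x₀ x₀ :=
      mul_le_mul_of_nonneg_left (hcount n) hεpos.le
    nlinarith [h2.1, h2.2, h3.1, h3.2]
  have hup : ∀ n : ℕ, valueIter q rq h n x₀ ≤ n :=
    fun n => valueIter_le_n q rq h hqst (fun x a => (hrq01 x a).2) n x₀
  have hge : G + ε * c ≤ gain q rq h x₀ :=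
    le_gain_of_bound q rq h x₀ (G + ε * c) (2 * B) hup hlow
  have hle : gain q rq h x₀ ≤ gain q rq f₁ x₀ := hf₁ψ h x₀
  have hfeq : gain q rq f₁ x₀ = gain p r f₁ x₀ :=
    gain_perturb_eq U p pbar r rbar f₁ hf₁avoid x₀
  have := hf₁gle x₀
  nlinarith [mul_pos hεpos hc]

end Side

end Stmt11Aux

open Stmt11Aux in
/-- Decoupling lemma: let `φ = (p, r)` be an ergodic finite MDP, `U₁, U₂` disjoint sets
of suboptimal state-action pairs, and `ψⱼ` the MDP equal to `(pbar, rbar)` on `Uⱼ`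
(with `U₀ = U₁ ∪ U₂`) and to `φ` elsewhere.  If `Π*(φ) ∩ Π*(ψ₀) = ∅`, then
`Π*(φ) ∩ Π*(ψ₁) = ∅` or `Π*(φ) ∩ Π*(ψ₂) = ∅`. -/
theorem stmt11 [Fintype S] [Fintype A] [DecidableEq S] [DecidableEq A]
    [Nonempty S] [Nonempty A]
    (p pbar : S → A → S → ℝ) (r rbar : S → A → ℝ)
    (hp : ∀ x a, (∀ y, 0 ≤ p x a y) ∧ ∑ y, p x a y = 1)
    (hpbar : ∀ x a, (∀ y, 0 ≤ pbar x a y) ∧ ∑ y, pbar x a y = 1)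
    (hr : ∀ x a, r x a ∈ Set.Icc (0:ℝ) 1)
    (hrbar : ∀ x a, rbar x a ∈ Set.Icc (0:ℝ) 1)
    (herg : IsErgodic p)
    (U₁ U₂ : Finset (S × A)) (hdisj : Disjoint U₁ U₂)
    (hsub : ∀ xa ∈ U₁ ∪ U₂, ∀ f ∈ OptPolicies p r, f xa.1 ≠ xa.2)
    (h0 : OptPolicies p r ∩
        OptPolicies (perturbP (U₁ ∪ U₂) p pbar) (perturbR (U₁ ∪ U₂) r rbar) = ∅) :
    OptPolicies p r ∩ OptPolicies (perturbP U₁ p pbar) (perturbR U₁ r rbar) = ∅ ∨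
    OptPolicies p r ∩ OptPolicies (perturbP U₂ p pbar) (perturbR U₂ r rbar) = ∅ := by
  classical
  by_contra hcon
  push_neg at hcon
  obtain ⟨h1ne, h2ne⟩ := hcon
  obtain ⟨f₁, hf₁⟩ := h1ne
  obtain ⟨f₂, hf₂⟩ := h2ne
  obtain ⟨G, b, hstar, B, hB0, hbB, hineq, heq, hgainle, hgainstar⟩ :=
    exists_opt p r hp hr herg
  have hstaropt : hstar ∈ OptPolicies p r := by
    intro g x
    rw [hgainstar x]
    exact hgainle g x
  have havoidstar : ∀ z, (z, hstar z) ∉ U₁ ∪ U₂ :=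
    fun z hz => hsub (z, hstar z) hz hstar hstaropt rfl
  have hf₁avoid : ∀ z, (z, f₁ z) ∉ U₁ ∪ U₂ :=
    fun z hz => hsub (z, f₁ z) hz f₁ hf₁.1 rfl
  have hf₂avoid : ∀ z, (z, f₂ z) ∉ U₁ ∪ U₂ :=
    fun z hz => hsub (z, f₂ z) hz f₂ hf₂.1 rfl
  have hf₁gle : ∀ x, gain p r f₁ x ≤ G := fun x => hgainle f₁ x
  have hf₂gle : ∀ x, gain p r f₂ x ≤ G := fun x => hgainle f₂ x
  by_cases hall : ∀ xa ∈ U₁ ∪ U₂,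
      rbar xa.1 xa.2 + ∑ y, pbar xa.1 xa.2 y * b y ≤ G + b xa.1
  · -- then hstar is also optimal for ψ₀, contradicting h0
    have hqst := perturb_stoch (U₁ ∪ U₂) p pbar hp hpbar
    have hrq01 := perturb_rew (U₁ ∪ U₂) r rbar hr hrbar
    have hmem0 : hstar ∈ OptPolicies p r ∩
        OptPolicies (perturbP (U₁ ∪ U₂) p pbar) (perturbR (U₁ ∪ U₂) r rbar) := by
      refine ⟨hstaropt, ?_⟩
      intro g x
      have hg1 : gain (perturbP (U₁ ∪ U₂) p pbar) (perturbR (U₁ ∪ U₂) r rbar) hstar x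
          = G := by
        rw [gain_perturb_eq (U₁ ∪ U₂) p pbar r rbar hstar havoidstar x]
        exact hgainstar x
      rw [hg1]
      apply gain_le_of_bound _ _ g x G (2 * B)
      · exact fun n => valueIter_nonneg _ _ g hqst (fun x a => (hrq01 x a).1) n x
      · intro n
        refine valueIter_le_of_superharmonic _ _ g hqst G b B hbB ?_ n x
        intro z
        rw [mulVec_apply']
        show perturbR (U₁ ∪ U₂) r rbar z (g z)
          + ∑ y, perturbP (U₁ ∪ U₂) p pbar z (g z) y * b y ≤ G + b z
        by_cases hmem : (z, g z) ∈ U₁ ∪ U₂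
        · have h2 := hall (z, g z) hmem
          have e1 : perturbR (U₁ ∪ U₂) r rbar z (g z) = rbar z (g z) := if_pos hmem
          have e2 : ∀ y, perturbP (U₁ ∪ U₂) p pbar z (g z) y = pbar z (g z) y :=
            fun y => if_pos hmem
          rw [e1, Finset.sum_congr rfl (fun y _ => by rw [e2 y])]
          exact h2
        · have e1 : perturbR (U₁ ∪ U₂) r rbar z (g z) = r z (g z) := if_neg hmem
          have e2 : ∀ y, perturbP (U₁ ∪ U₂) p pbar z (g z) y = p z (g z) y :=
            fun y => if_neg hmem
          rw [e1, Finset.sum_congr rfl (fun y _ => by rw [e2 y])]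
          exact hineq z (g z)
    rw [h0] at hmem0
    exact Set.notMem_empty hstar hmem0
  · push_neg at hall
    obtain ⟨⟨x₀, a₀⟩, hmem0, hgt⟩ := hall
    rcases Finset.mem_union.1 hmem0 with hmem1 | hmem2
    · exact side p pbar r rbar hp hpbar hr hrbar herg U₁ G b hstar B hbB heq hgainle
        (fun z hz => havoidstar z (Finset.mem_union_left _ hz)) x₀ a₀ hmem1 hgt f₁
        (fun z hz => hf₁avoid z (Finset.mem_union_left _ hz)) hf₁gle hf₁.2
    · exact side p pbar r rbar hp hpbar hr hrbar herg U₂ G b hstar B hbB heq hgainle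
        (fun z hz => havoidstar z (Finset.mem_union_right _ hz)) x₀ a₀ hmem2 hgt f₂
        (fun z hz => hf₂avoid z (Finset.mem_union_right _ hz)) hf₂gle hf₂.2

end MDP
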